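/- Let p be an odd prime, let k ≥ 2 be a divisor of p − 1, let g be a generator of F_p^*, and let χ_k be the multiplicative character of F_p of order k given by χ_k(g^t) = exp(2π√−1·t/k) (with χ_k(0) = 0). Let φ_a (for a ∈ F_p) denote the columns of Φ_p^{(k)}. Then for every pair of disjoint subsets I, J ⊆ F_p, |⟨Σ_{i∈I} φ_i, Σ_{j∈J} φ_j⟩| ≤ p^{−1/2}·Σ_{h=1}^{k−1} |Σ_{i∈I, j∈J} χ_k^{−h}(i−j)|. -/

import Mathlib

/-- The canonical additive character `ψ` of `F_p`, `ψ(x) = exp(2π√−1·x/p)`. -/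
noncomputable def psi (p : ℕ) (x : ZMod p) : ℂ :=
  Complex.exp (2 * Real.pi * Complex.I * (x.val : ℂ) / (p : ℂ))

/-- The `((p+k−1)/k) × p` matrix `Φ_p^{(k)}`: columns indexed by `a ∈ F_p`;
rows indexed by `Option R_p^{(k)}` where `R_p^{(k)}` is the set of nonzero `k`-th
power residues.  The `none` row has entries `1/√p`, and the row of `b ∈ R_p^{(k)}`
has entries `√(k/p)·ψ(b·a)`. -/
noncomputable def Phi (p k : ℕ) :
    Matrix (Option {b : ZMod p // ∃ x : ZMod p, x ≠ 0 ∧ x ^ k = b}) (ZMod p) ℂ :=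
  fun r a =>
    match r with
    | none => ((1 / Real.sqrt p : ℝ) : ℂ)
    | some b => ((Real.sqrt ((k : ℝ) / (p : ℝ)) : ℝ) : ℂ) * psi p (b.1 * a)

open Complex Finset

lemma psi_apply (p : ℕ) (x : ZMod p) :
    psi p x = Complex.exp (((2 * Real.pi * x.val / p : ℝ) : ℂ) * Complex.I) := by
  unfold psi; congr 1; push_cast; ring

lemma abs_psi (p : ℕ) (x : ZMod p) : ‖psi p x‖ = 1 := by
  rw [psi_apply]; exact Complex.norm_exp_ofReal_mul_I _

lemma psi_ne_zero (p : ℕ) (x : ZMod p) : psi p x ≠ 0 := Complex.exp_ne_zero _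

lemma psi_zero (p : ℕ) : psi p 0 = 1 := by
  simp [psi]

lemma psi_add (p : ℕ) [NeZero p] (x y : ZMod p) :
    psi p (x + y) = psi p x * psi p y := by
  have hp0 : (p : ℂ) ≠ 0 := Nat.cast_ne_zero.mpr (NeZero.ne p)
  unfold psi
  rw [← Complex.exp_add]
  have hv : x.val + y.val = (x + y).val + p * ((x.val + y.val) / p) := by
    rw [ZMod.val_add]
    exact (Nat.mod_add_div _ _).symm
  have : ((x.val : ℂ) + y.val) = ((x+y).val : ℂ) + p * ((x.val + y.val) / p : ℕ) := by
    exact_mod_cast congrArg (Nat.cast : ℕ → ℂ) hv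
  rw [← add_div, ← mul_add, this]
  set c : ℕ := (x.val + y.val) / p
  have : 2 * (Real.pi:ℂ) * Complex.I * (((x+y).val : ℂ) + p * c) / p
      = 2 * (Real.pi:ℂ) * Complex.I * ((x+y).val : ℂ) / p + (c:ℂ) * (2 * Real.pi * Complex.I) := by
    field_simp
  rw [this, Complex.exp_add]
  have h1 : Complex.exp ((c:ℂ) * (2 * Real.pi * Complex.I)) = 1 := by
    exact_mod_cast Complex.exp_int_mul_two_pi_mul_I (c : ℤ)
  rw [h1, mul_one]

-- general helper: exp(2πI t / k) = 1 ↔ k ∣ t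
lemma exp_ratio_eq_one_iff (k t : ℕ) (hk : k ≠ 0) :
    Complex.exp (2 * Real.pi * Complex.I * (t : ℂ) / (k : ℂ)) = 1 ↔ k ∣ t := by
  have hkC : (k : ℂ) ≠ 0 := Nat.cast_ne_zero.mpr hk
  have h2 : (2 * (Real.pi:ℂ) * Complex.I) ≠ 0 := by
    simp [Real.pi_ne_zero, Complex.I_ne_zero, Complex.ofReal_ne_zero]
  constructor
  · intro h
    rw [Complex.exp_eq_one_iff] at h
    obtain ⟨n, hn⟩ := h
    have ht : (t : ℂ) = n * k := by
      have := congrArg (· * (k:ℂ)) hn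
      simp only [div_mul_cancel₀ _ hkC] at this
      have h3 : (t:ℂ) * (2 * (Real.pi:ℂ) * Complex.I) = ((n:ℂ) * k) * (2 * (Real.pi:ℂ) * Complex.I) := by
        rw [mul_comm]
        rw [this]; ring
      exact mul_right_cancel₀ h2 h3
    have htz : (t : ℤ) = n * k := by exact_mod_cast ht
    have : (k:ℤ) ∣ (t:ℤ) := ⟨n, by linarith⟩
    exact_mod_cast this
  · rintro ⟨m, rfl⟩
    have : 2 * (Real.pi:ℂ) * Complex.I * ((k * m : ℕ) : ℂ) / (k : ℂ)
        = (m : ℂ) * (2 * Real.pi * Complex.I) := by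
      push_cast; field_simp
    rw [this]
    exact_mod_cast Complex.exp_int_mul_two_pi_mul_I (m : ℤ)

lemma conj_psi (p : ℕ) [NeZero p] (x : ZMod p) :
    (starRingEnd ℂ) (psi p x) = psi p (-x) := by
  have h1 : psi p x * psi p (-x) = 1 := by
    rw [← psi_add, add_neg_cancel, psi_zero]
  rw [← Complex.inv_eq_conj (abs_psi p x)]
  exact inv_eq_of_mul_eq_one_right h1

lemma psi_ne_one (p : ℕ) [NeZero p] (x : ZMod p) (hx : x ≠ 0) : psi p x ≠ 1 := by
  unfold psi
  rw [ne_eq, exp_ratio_eq_one_iff p x.val (NeZero.ne p)]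
  intro h
  have h1 : x.val < p := ZMod.val_lt x
  have h2 : x.val ≠ 0 := fun h0 => hx (by rwa [← ZMod.val_eq_zero])
  exact h2 (Nat.eq_zero_of_dvd_of_lt h h1)

lemma sum_psi (p : ℕ) [NeZero p] (hp : p.Prime) (c : ZMod p) (hc : c ≠ 0) :
    ∑ z : ZMod p, psi p (z * c) = 0 := by
  have key : psi p c * ∑ z : ZMod p, psi p (z * c) = ∑ z : ZMod p, psi p (z * c) := by
    rw [Finset.mul_sum]
    apply Fintype.sum_equiv (Equiv.addRight (1 : ZMod p))
    intro z
    simp only [Equiv.coe_addRight]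
    rw [← psi_add, add_mul, one_mul, add_comm]
  have h2 : (psi p c - 1) * ∑ z : ZMod p, psi p (z * c) = 0 := by
    rw [sub_mul, one_mul, key, sub_self]
  rcases mul_eq_zero.mp h2 with h | h
  · exact absurd (sub_eq_zero.mp h) (psi_ne_one p c hc)
  · exact h

lemma sum_psi_nz (p : ℕ) [NeZero p] (hp : p.Prime) (c : ZMod p) (hc : c ≠ 0) :
    ∑ z ∈ Finset.univ.erase (0 : ZMod p), psi p (z * c) = -1 := by
  have h := sum_psi p hp c hc
  rw [← Finset.add_sum_erase Finset.univ _ (Finset.mem_univ (0:ZMod p))] at h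
  rw [zero_mul, psi_zero] at h
  linear_combination h

lemma g_ne_zero {p : ℕ} [NeZero p] (hp : p.Prime) (hodd : p ≠ 2) {g : ZMod p}
    (hg : ∀ x : ZMod p, x ≠ 0 → ∃ t : ℕ, g ^ t = x) : g ≠ 0 := by
  haveI : Fact p.Prime := ⟨hp⟩
  intro h0
  have h2 : (2 : ZMod p) ≠ 0 := by
    have : ((2:ℕ) : ZMod p) ≠ 0 := by
      rw [Ne, ZMod.natCast_eq_zero_iff]
      intro hd
      have := (Nat.prime_dvd_prime_iff_eq hp Nat.prime_two).mp hd
      exact hodd this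
    simpa using this
  obtain ⟨t, ht⟩ := hg 2 h2
  rw [h0] at ht
  rcases Nat.eq_zero_or_pos t with rfl | htpos
  · rw [pow_zero] at ht
    have : (2:ZMod p) - 1 = 0 := by rw [← ht]; ring
    norm_num at this
  · rw [zero_pow (by omega)] at ht
    exact h2 ht.symm

section chi

variable {p : ℕ} [NeZero p] {k : ℕ} {g : ZMod p} {χk : ZMod p → ℂ}

lemma chi_mul (hg : ∀ x : ZMod p, x ≠ 0 → ∃ t : ℕ, g ^ t = x)
    (hχ : ∀ t : ℕ, χk (g ^ t) =
      Complex.exp (2 * Real.pi * Complex.I * (t : ℂ) / (k : ℂ)))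
    {x y : ZMod p} (hx : x ≠ 0) (hy : y ≠ 0) : χk (x * y) = χk x * χk y := by
  obtain ⟨t, rfl⟩ := hg x hx
  obtain ⟨s, rfl⟩ := hg y hy
  rw [← pow_add, hχ, hχ, hχ, ← Complex.exp_add]
  congr 1
  push_cast
  ring

lemma chi_pow (hg : ∀ x : ZMod p, x ≠ 0 → ∃ t : ℕ, g ^ t = x)
    (hχ : ∀ t : ℕ, χk (g ^ t) =
      Complex.exp (2 * Real.pi * Complex.I * (t : ℂ) / (k : ℂ)))
    {x : ZMod p} (hx : x ≠ 0) (m : ℕ) : χk (x ^ m) = (χk x) ^ m := by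
  obtain ⟨t, rfl⟩ := hg x hx
  rw [← pow_mul, hχ, hχ, ← Complex.exp_nat_mul]
  congr 1
  push_cast
  ring

lemma chi_one (hχ : ∀ t : ℕ, χk (g ^ t) =
      Complex.exp (2 * Real.pi * Complex.I * (t : ℂ) / (k : ℂ))) : χk 1 = 1 := by
  have := hχ 0
  simpa using this

lemma abs_chi (hg : ∀ x : ZMod p, x ≠ 0 → ∃ t : ℕ, g ^ t = x)
    (hχ : ∀ t : ℕ, χk (g ^ t) =
      Complex.exp (2 * Real.pi * Complex.I * (t : ℂ) / (k : ℂ)))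
    {x : ZMod p} (hx : x ≠ 0) : ‖χk x‖ = 1 := by
  obtain ⟨t, rfl⟩ := hg x hx
  rw [hχ]
  have : 2 * Real.pi * Complex.I * (t : ℂ) / (k : ℂ)
      = ((2 * Real.pi * t / k : ℝ) : ℂ) * Complex.I := by push_cast; ring
  rw [this]
  exact Complex.norm_exp_ofReal_mul_I _

lemma chi_ne_zero (hg : ∀ x : ZMod p, x ≠ 0 → ∃ t : ℕ, g ^ t = x)
    (hχ : ∀ t : ℕ, χk (g ^ t) =
      Complex.exp (2 * Real.pi * Complex.I * (t : ℂ) / (k : ℂ)))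
    {x : ZMod p} (hx : x ≠ 0) : χk x ≠ 0 := by
  intro h
  have := abs_chi hg hχ hx
  rw [h] at this
  simp at this

lemma conj_chi (hg : ∀ x : ZMod p, x ≠ 0 → ∃ t : ℕ, g ^ t = x)
    (hχ : ∀ t : ℕ, χk (g ^ t) =
      Complex.exp (2 * Real.pi * Complex.I * (t : ℂ) / (k : ℂ)))
    {x : ZMod p} (hx : x ≠ 0) : (starRingEnd ℂ) (χk x) = (χk x)⁻¹ :=
  (Complex.inv_eq_conj (abs_chi hg hχ hx)).symm

lemma chi_inv (hp : p.Prime) (hg : ∀ x : ZMod p, x ≠ 0 → ∃ t : ℕ, g ^ t = x)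
    (hχ : ∀ t : ℕ, χk (g ^ t) =
      Complex.exp (2 * Real.pi * Complex.I * (t : ℂ) / (k : ℂ)))
    {x : ZMod p} (hx : x ≠ 0) : χk x⁻¹ = (χk x)⁻¹ := by
  haveI : Fact p.Prime := ⟨hp⟩
  have hxi : x⁻¹ ≠ 0 := inv_ne_zero hx
  have h1 : χk x⁻¹ * χk x = 1 := by
    rw [← chi_mul hg hχ hxi hx, inv_mul_cancel₀ hx, chi_one hχ]
  exact eq_inv_of_mul_eq_one_left h1

lemma chi_pow_k (hk : k ≠ 0) (hg : ∀ x : ZMod p, x ≠ 0 → ∃ t : ℕ, g ^ t = x)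
    (hχ : ∀ t : ℕ, χk (g ^ t) =
      Complex.exp (2 * Real.pi * Complex.I * (t : ℂ) / (k : ℂ)))
    {x : ZMod p} (hx : x ≠ 0) : (χk x) ^ k = 1 := by
  obtain ⟨t, rfl⟩ := hg x hx
  rw [hχ, ← Complex.exp_nat_mul]
  rw [show (k:ℂ) * (2 * Real.pi * Complex.I * (t : ℂ) / (k : ℂ))
      = 2 * Real.pi * Complex.I * ((k * t : ℕ) : ℂ) / (k : ℂ) by push_cast; ring]
  rw [exp_ratio_eq_one_iff k (k*t) hk]
  exact Dvd.intro t rfl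

end chi

section chi2

variable {p : ℕ} [NeZero p] {k : ℕ} {g : ZMod p} {χk : ZMod p → ℂ}
variable (hp : p.Prime) (hodd : p ≠ 2)
variable (hg : ∀ x : ZMod p, x ≠ 0 → ∃ t : ℕ, g ^ t = x)
variable (hχ : ∀ t : ℕ, χk (g ^ t) =
      Complex.exp (2 * Real.pi * Complex.I * (t : ℂ) / (k : ℂ)))

include hg hχ

lemma sum_char_pow (hk : k ≠ 0) (hp : p.Prime) (hodd : p ≠ 2) {b : ZMod p} (hb : b ≠ 0) :
    ∑ h ∈ Finset.range k, (χk b) ^ h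
      = if ∃ x : ZMod p, x ≠ 0 ∧ x ^ k = b then (k:ℂ) else 0 := by
  haveI : Fact p.Prime := ⟨hp⟩
  by_cases hP : ∃ x : ZMod p, x ≠ 0 ∧ x ^ k = b
  · rw [if_pos hP]
    obtain ⟨x, hx, rfl⟩ := hP
    have h1 : χk (x ^ k) = 1 := by rw [chi_pow hg hχ hx]; exact chi_pow_k hk hg hχ hx
    simp [h1]
  · rw [if_neg hP]
    obtain ⟨t, rfl⟩ := hg b hb
    have hkt : ¬ k ∣ t := by
      rintro ⟨m, rfl⟩
      exact hP ⟨g ^ m, pow_ne_zero _ (g_ne_zero hp hodd hg), by rw [← pow_mul, mul_comm]⟩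
    have hne1 : χk (g ^ t) ≠ 1 := by
      rw [hχ, ne_eq, exp_ratio_eq_one_iff k t hk]
      exact hkt
    rw [geom_sum_eq hne1, chi_pow_k hk hg hχ (pow_ne_zero _ (g_ne_zero hp hodd hg)),
      sub_self, zero_div]

lemma chi_g_pow_ne_one (hp : p.Prime) {h : ℕ} (hh1 : 1 ≤ h) (hhk : h < k) :
    (χk g) ^ h ≠ 1 := by
  have hgg : χk g = Complex.exp (2 * Real.pi * Complex.I * (1 : ℂ) / (k : ℂ)) := by
    have := hχ 1; rw [pow_one] at this; rw [this]; norm_num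
  rw [hgg, ← Complex.exp_nat_mul,
    show (h:ℂ) * (2 * Real.pi * Complex.I * (1 : ℂ) / (k : ℂ))
      = 2 * Real.pi * Complex.I * ((h : ℕ) : ℂ) / (k : ℂ) by push_cast; ring,
    ne_eq, exp_ratio_eq_one_iff k h (by omega)]
  intro hd
  have := Nat.le_of_dvd (by omega) hd
  omega

lemma sum_chi_pow_eq_zero (hp : p.Prime) (hodd : p ≠ 2) {h : ℕ} (hh1 : 1 ≤ h) (hhk : h < k) :
    ∑ b ∈ Finset.univ.erase (0 : ZMod p), (χk b) ^ h = 0 := by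
  haveI : Fact p.Prime := ⟨hp⟩
  have hg0 : g ≠ 0 := g_ne_zero hp hodd hg
  set S := ∑ b ∈ Finset.univ.erase (0 : ZMod p), (χk b) ^ h with hS
  have key : (χk g) ^ h * S = S := by
    rw [hS, Finset.mul_sum]
    apply Finset.sum_nbij' (fun b => g * b) (fun c => g⁻¹ * c)
    · intro a ha
      simp only [Finset.mem_erase, Finset.mem_univ, and_true] at ha ⊢
      exact mul_ne_zero hg0 ha
    · intro a ha
      simp only [Finset.mem_erase, Finset.mem_univ, and_true] at ha ⊢
      exact mul_ne_zero (inv_ne_zero hg0) ha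
    · intro a _; field_simp
    · intro a _; field_simp
    · intro a ha
      simp only [Finset.mem_erase, Finset.mem_univ, and_true] at ha
      rw [← mul_pow, ← chi_mul hg hχ hg0 ha]
  have h2 : ((χk g) ^ h - 1) * S = 0 := by rw [sub_mul, one_mul, key, sub_self]
  rcases mul_eq_zero.mp h2 with h3 | h3
  · exact absurd (sub_eq_zero.mp h3) (chi_g_pow_ne_one hg hχ hp hh1 hhk)
  · exact h3

end chi2

section gauss

variable {p : ℕ} [NeZero p] {k : ℕ} {g : ZMod p} {χk : ZMod p → ℂ}

lemma gauss_mul_conj (hp : p.Prime) (hodd : p ≠ 2)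
    (hg : ∀ x : ZMod p, x ≠ 0 → ∃ t : ℕ, g ^ t = x)
    (hχ : ∀ t : ℕ, χk (g ^ t) =
      Complex.exp (2 * Real.pi * Complex.I * (t : ℂ) / (k : ℂ)))
    {h : ℕ} (hh1 : 1 ≤ h) (hhk : h < k) :
    (∑ b ∈ Finset.univ.erase (0 : ZMod p), (χk b) ^ h * psi p b) *
      (starRingEnd ℂ) (∑ b ∈ Finset.univ.erase (0 : ZMod p), (χk b) ^ h * psi p b)
      = (p : ℂ) := by
  haveI : Fact p.Prime := ⟨hp⟩
  have hg0 : g ≠ 0 := g_ne_zero hp hodd hg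
  rw [map_sum]
  have hconj : ∀ b ∈ Finset.univ.erase (0 : ZMod p),
      (starRingEnd ℂ) ((χk b) ^ h * psi p b) = ((χk b)⁻¹) ^ h * psi p (-b) := by
    intro b hb
    simp only [Finset.mem_erase, Finset.mem_univ, and_true] at hb
    rw [map_mul, map_pow, conj_chi hg hχ hb, conj_psi]
  rw [Finset.sum_congr rfl hconj, Finset.sum_mul_sum]
  have step1 : ∀ z ∈ Finset.univ.erase (0 : ZMod p),
      ∑ y ∈ Finset.univ.erase (0 : ZMod p),
        (χk y) ^ h * psi p y * (((χk z)⁻¹) ^ h * psi p (-z))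
      = ∑ u ∈ Finset.univ.erase (0 : ZMod p), (χk u) ^ h * psi p (z * (u - 1)) := by
    intro z hz
    simp only [Finset.mem_erase, Finset.mem_univ, and_true] at hz
    apply Finset.sum_nbij' (fun y => z⁻¹ * y) (fun u => z * u)
    · intro a ha
      simp only [Finset.mem_erase, Finset.mem_univ, and_true] at ha ⊢
      exact mul_ne_zero (inv_ne_zero hz) ha
    · intro a ha
      simp only [Finset.mem_erase, Finset.mem_univ, and_true] at ha ⊢
      exact mul_ne_zero hz ha
    · intro a _; field_simp
    · intro a _; field_simp
    · intro y hy
      simp only [Finset.mem_erase, Finset.mem_univ, and_true] at hy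
      have h1 : χk (z * (z⁻¹ * y)) = χk z * χk (z⁻¹ * y) :=
        chi_mul hg hχ hz (mul_ne_zero (inv_ne_zero hz) hy)
      have h2 : z * (z⁻¹ * y) = y := by field_simp
      rw [h2] at h1
      have h3 : psi p (z * (z⁻¹ * y - 1)) = psi p y * psi p (-z) := by
        rw [← psi_add]; congr 1; field_simp; ring
      rw [h3, h1]
      have hz0 : χk z ≠ 0 := chi_ne_zero hg hχ hz
      have hzh : χk z ^ h * (χk z)⁻¹ ^ h = 1 := by rw [← mul_pow, mul_inv_cancel₀ hz0, one_pow]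
      field_simp
      linear_combination (χk (y / z) ^ h * psi p y * psi p (-z)) * hzh
  rw [Finset.sum_comm, Finset.sum_congr rfl step1, Finset.sum_comm]
  have step2 : ∀ u ∈ Finset.univ.erase (0 : ZMod p),
      ∑ z ∈ Finset.univ.erase (0 : ZMod p), (χk u) ^ h * psi p (z * (u - 1))
      = (χk u) ^ h * (-1 + if u = 1 then (p : ℂ) else 0) := by
    intro u hu
    rw [← Finset.mul_sum]
    congr 1
    by_cases h1 : u = 1
    · subst h1
      simp only [sub_self, mul_zero, psi_zero, if_pos rfl]
      rw [Finset.sum_const, Finset.card_erase_of_mem (Finset.mem_univ _)]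
      have : Fintype.card (ZMod p) = p := ZMod.card p
      rw [Finset.card_univ, this]
      have hp1 : 1 ≤ p := hp.one_lt.le
      rw [nsmul_eq_mul, Nat.cast_sub hp1]
      push_cast
      ring
    · rw [if_neg h1, sum_psi_nz p hp (u - 1) (sub_ne_zero.mpr h1)]
      ring
  rw [Finset.sum_congr rfl step2]
  have expand : ∀ u ∈ Finset.univ.erase (0 : ZMod p),
      (χk u) ^ h * (-1 + if u = 1 then (p : ℂ) else 0)
      = -(χk u) ^ h + (if u = 1 then (χk u) ^ h * (p:ℂ) else 0) := by
    intro u _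
    split_ifs <;> ring
  rw [Finset.sum_congr rfl expand, Finset.sum_add_distrib, Finset.sum_neg_distrib,
    sum_chi_pow_eq_zero hg hχ hp hodd hh1 hhk, neg_zero, zero_add,
    Finset.sum_ite_eq' (Finset.univ.erase (0 : ZMod p)) (1 : ZMod p)
      (fun u => (χk u) ^ h * (p:ℂ))]
  rw [if_pos (by simp), chi_one hχ, one_pow, one_mul]

end gauss

section main

variable {p : ℕ} [NeZero p] {k : ℕ} {g : ZMod p} {χk : ZMod p → ℂ}

lemma abs_gauss (hp : p.Prime) (hodd : p ≠ 2)
    (hg : ∀ x : ZMod p, x ≠ 0 → ∃ t : ℕ, g ^ t = x)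
    (hχ : ∀ t : ℕ, χk (g ^ t) =
      Complex.exp (2 * Real.pi * Complex.I * (t : ℂ) / (k : ℂ)))
    {h : ℕ} (hh1 : 1 ≤ h) (hhk : h < k) :
    ‖∑ b ∈ Finset.univ.erase (0 : ZMod p), (χk b) ^ h * psi p b‖
      = Real.sqrt p := by
  set G := ∑ b ∈ Finset.univ.erase (0 : ZMod p), (χk b) ^ h * psi p b with hG
  have h1 : G * (starRingEnd ℂ) G = (p : ℂ) := gauss_mul_conj hp hodd hg hχ hh1 hhk
  rw [Complex.mul_conj] at h1
  have h2 : Complex.normSq G = (p : ℝ) := by exact_mod_cast h1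
  rw [Complex.norm_def, h2]

lemma key_count (hp : p.Prime) (hodd : p ≠ 2) (hk2 : 2 ≤ k)
    (hg : ∀ x : ZMod p, x ≠ 0 → ∃ t : ℕ, g ^ t = x)
    (hχ : ∀ t : ℕ, χk (g ^ t) =
      Complex.exp (2 * Real.pi * Complex.I * (t : ℂ) / (k : ℂ)))
    {d : ZMod p} (hd : d ≠ 0) :
    (k : ℂ) * ∑ b ∈ Finset.univ.filter (fun b => ∃ x : ZMod p, x ≠ 0 ∧ x ^ k = b),
        psi p (b * d)
      = -1 + ∑ h ∈ Finset.Icc 1 (k-1),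
          (∑ b ∈ Finset.univ.erase (0 : ZMod p), (χk b) ^ h * psi p b)
            * (χk d) ^ (-(h:ℤ)) := by
  haveI : Fact p.Prime := ⟨hp⟩
  have hk0 : k ≠ 0 := by omega
  have hdc : χk d ≠ 0 := chi_ne_zero hg hχ hd
  have hsub : Finset.univ.filter (fun b : ZMod p => ∃ x : ZMod p, x ≠ 0 ∧ x ^ k = b)
      = (Finset.univ.erase (0 : ZMod p)).filter
          (fun b => ∃ x : ZMod p, x ≠ 0 ∧ x ^ k = b) := by
    ext b
    simp only [Finset.mem_filter, Finset.mem_erase, Finset.mem_univ, true_and, and_true]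
    constructor
    · rintro ⟨x, hx, rfl⟩
      exact ⟨pow_ne_zero _ hx, x, hx, rfl⟩
    · rintro ⟨_, hx⟩; exact hx
  rw [hsub, Finset.mul_sum, Finset.sum_filter]
  have step1 : ∀ b ∈ Finset.univ.erase (0 : ZMod p),
      (if ∃ x : ZMod p, x ≠ 0 ∧ x ^ k = b then (k:ℂ) * psi p (b * d) else 0)
      = ∑ h ∈ Finset.range k, (χk b) ^ h * psi p (b * d) := by
    intro b hb
    simp only [Finset.mem_erase, Finset.mem_univ, and_true] at hb
    rw [← Finset.sum_mul, sum_char_pow hg hχ hk0 hp hodd hb]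
    split_ifs <;> simp
  rw [Finset.sum_congr rfl step1, Finset.sum_comm]
  have hsplit : Finset.range k = insert 0 (Finset.Icc 1 (k-1)) := by
    ext h; simp only [Finset.mem_range, Finset.mem_insert, Finset.mem_Icc]; omega
  rw [hsplit, Finset.sum_insert (by simp)]
  congr 1
  · simp only [pow_zero, one_mul]
    exact sum_psi_nz p hp d hd
  · apply Finset.sum_congr rfl
    intro h hh
    simp only [Finset.mem_Icc] at hh
    have hzp : (χk d) ^ (-(h:ℤ)) = ((χk d)⁻¹) ^ h := by
      rw [zpow_neg, zpow_natCast, inv_pow]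
    rw [hzp, Finset.sum_mul]
    apply Finset.sum_nbij' (fun b => b * d) (fun c => c * d⁻¹)
    · intro a ha
      simp only [Finset.mem_erase, Finset.mem_univ, and_true] at ha ⊢
      exact mul_ne_zero ha hd
    · intro a ha
      simp only [Finset.mem_erase, Finset.mem_univ, and_true] at ha ⊢
      exact mul_ne_zero ha (inv_ne_zero hd)
    · intro a _; field_simp
    · intro a _; field_simp
    · intro b hb
      simp only [Finset.mem_erase, Finset.mem_univ, and_true] at hb
      rw [chi_mul hg hχ hb hd, mul_pow]
      have : (χk d) ^ h * ((χk d)⁻¹) ^ h = 1 := by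
        rw [← mul_pow, mul_inv_cancel₀ hdc, one_pow]
      field_simp
      linear_combination (-(χk b ^ h * psi p (b * d))) * this
  end main

section pair

variable {p : ℕ} [NeZero p] {k : ℕ} {g : ZMod p} {χk : ZMod p → ℂ}

lemma pair_inner (hp : p.Prime) (hodd : p ≠ 2) (hk2 : 2 ≤ k)
    (hg : ∀ x : ZMod p, x ≠ 0 → ∃ t : ℕ, g ^ t = x)
    (hχ : ∀ t : ℕ, χk (g ^ t) =
      Complex.exp (2 * Real.pi * Complex.I * (t : ℂ) / (k : ℂ)))
    {i j : ZMod p} (hd : i - j ≠ 0) :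
    ∑ r : Option {b : ZMod p // ∃ x : ZMod p, x ≠ 0 ∧ x ^ k = b},
        Phi p k r i * (starRingEnd ℂ) (Phi p k r j)
      = (1/(p:ℂ)) * ∑ h ∈ Finset.Icc 1 (k-1),
          (∑ b ∈ Finset.univ.erase (0 : ZMod p), (χk b) ^ h * psi p b)
            * (χk (i - j)) ^ (-(h:ℤ)) := by
  haveI : Fact p.Prime := ⟨hp⟩
  have hp0 : (0:ℝ) < p := by exact_mod_cast hp.pos
  have hpC : (p:ℂ) ≠ 0 := Nat.cast_ne_zero.mpr hp.pos.ne'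
  have hkC : (k:ℂ) ≠ 0 := Nat.cast_ne_zero.mpr (by omega)
  rw [Fintype.sum_option]
  have hnone : Phi p k none i * (starRingEnd ℂ) (Phi p k none j) = 1/(p:ℂ) := by
    show ((1 / Real.sqrt p : ℝ) : ℂ) * (starRingEnd ℂ) ((1 / Real.sqrt p : ℝ) : ℂ) = _
    rw [Complex.conj_ofReal, ← Complex.ofReal_mul]
    rw [show (1 / Real.sqrt p) * (1 / Real.sqrt p) = 1/(p:ℝ) by
      rw [div_mul_div_comm, one_mul, Real.mul_self_sqrt hp0.le]]
    push_cast
    ring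
  have hsome : ∀ b : {b : ZMod p // ∃ x : ZMod p, x ≠ 0 ∧ x ^ k = b},
      Phi p k (some b) i * (starRingEnd ℂ) (Phi p k (some b) j)
        = ((k:ℂ)/(p:ℂ)) * psi p (b.1 * (i - j)) := by
    intro b
    show (((Real.sqrt ((k : ℝ) / (p : ℝ)) : ℝ) : ℂ) * psi p (b.1 * i))
        * (starRingEnd ℂ) (((Real.sqrt ((k : ℝ) / (p : ℝ)) : ℝ) : ℂ) * psi p (b.1 * j)) = _
    rw [map_mul, Complex.conj_ofReal, conj_psi]
    have hc : (((Real.sqrt ((k : ℝ) / (p : ℝ)) : ℝ) : ℂ))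
        * (((Real.sqrt ((k : ℝ) / (p : ℝ)) : ℝ) : ℂ)) = ((k:ℂ)/(p:ℂ)) := by
      rw [← Complex.ofReal_mul, Real.mul_self_sqrt (by positivity)]
      push_cast; ring
    have hψ : psi p (b.1 * i) * psi p (-(b.1 * j)) = psi p (b.1 * (i - j)) := by
      rw [← psi_add]; congr 1; ring
    calc _ = ((((Real.sqrt ((k : ℝ) / (p : ℝ)) : ℝ) : ℂ))
          * (((Real.sqrt ((k : ℝ) / (p : ℝ)) : ℝ) : ℂ)))
          * (psi p (b.1 * i) * psi p (-(b.1 * j))) := by ring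
      _ = _ := by rw [hc, hψ]
  rw [hnone, Finset.sum_congr rfl (fun b _ => hsome b), ← Finset.mul_sum]
  have hsubty : ∑ b : {b : ZMod p // ∃ x : ZMod p, x ≠ 0 ∧ x ^ k = b},
      psi p (b.1 * (i - j))
      = ∑ b ∈ Finset.univ.filter (fun b : ZMod p => ∃ x : ZMod p, x ≠ 0 ∧ x ^ k = b),
          psi p (b * (i - j)) := by
    exact (Finset.sum_subtype (p := fun b : ZMod p => ∃ x : ZMod p, x ≠ 0 ∧ x ^ k = b)
      (Finset.univ.filter (fun b : ZMod p => ∃ x : ZMod p, x ≠ 0 ∧ x ^ k = b))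
      (by simp) (fun b => psi p (b * (i - j)))).symm
  rw [hsubty]
  have hkey := key_count hp hodd hk2 hg hχ hd
  linear_combination ((1:ℂ)/(p:ℂ)) * hkey

end pair

/-- for an odd prime `p`, a divisor `k ≥ 2` of `p − 1`, a generator `g`
of `F_p^*`, and the multiplicative character `χ_k` of order `k` with
`χ_k(g^t) = exp(2π√−1·t/k)` and `χ_k(0) = 0`, for every pair of disjoint subsets
`I, J ⊆ F_p` one has
`|⟨Σ_{i∈I} φ_i, Σ_{j∈J} φ_j⟩| ≤ p^{−1/2}·Σ_{h=1}^{k−1} |Σ_{i∈I,j∈J} χ_k^{−h}(i−j)|`,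
where `χ_k^{−h}(x) = (χ_k x)^{−h}`. -/
theorem stmt_7 (p : ℕ) (hp : p.Prime) (hodd : p ≠ 2) [NeZero p]
    (k : ℕ) (hk2 : 2 ≤ k) (hkdvd : k ∣ p - 1)
    (g : ZMod p) (hg : ∀ x : ZMod p, x ≠ 0 → ∃ t : ℕ, g ^ t = x)
    (χk : ZMod p → ℂ) (hχ0 : χk 0 = 0)
    (hχ : ∀ t : ℕ, χk (g ^ t) =
      Complex.exp (2 * Real.pi * Complex.I * (t : ℂ) / (k : ℂ))) :
    ∀ I J : Finset (ZMod p), Disjoint I J →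
      ‖∑ r, (∑ i ∈ I, Phi p k r i) * (starRingEnd ℂ) (∑ j ∈ J, Phi p k r j)‖ ≤
        (p : ℝ) ^ (-(1 : ℝ) / 2) *
          ∑ h ∈ Finset.Icc 1 (k - 1),
            ‖∑ i ∈ I, ∑ j ∈ J, (χk (i - j)) ^ (-(h : ℤ))‖ := by
  intro I J hIJ
  haveI : Fact p.Prime := ⟨hp⟩
  have hp0 : (0:ℝ) < p := by exact_mod_cast hp.pos
  set G : ℕ → ℂ := fun h => ∑ b ∈ Finset.univ.erase (0 : ZMod p), (χk b) ^ h * psi p b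
    with hGdef
  have hpair : ∀ i ∈ I, ∀ j ∈ J,
      (∑ r : Option {b : ZMod p // ∃ x : ZMod p, x ≠ 0 ∧ x ^ k = b},
        Phi p k r i * (starRingEnd ℂ) (Phi p k r j))
      = ∑ h ∈ Finset.Icc 1 (k-1),
          (1/(p:ℂ)) * (G h * (χk (i - j)) ^ (-(h:ℤ))) := by
    intro i hi j hj
    have hd : i - j ≠ 0 := by
      rw [sub_ne_zero]
      intro hij
      exact (Finset.disjoint_left.mp hIJ hi) (hij ▸ hj)
    rw [pair_inner hp hodd hk2 hg hχ hd, Finset.mul_sum]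
  have hswap : (∑ r, (∑ i ∈ I, Phi p k r i) * (starRingEnd ℂ) (∑ j ∈ J, Phi p k r j))
      = ∑ i ∈ I, ∑ j ∈ J,
          ∑ r : Option {b : ZMod p // ∃ x : ZMod p, x ≠ 0 ∧ x ^ k = b},
            Phi p k r i * (starRingEnd ℂ) (Phi p k r j) := by
    simp_rw [map_sum, Finset.sum_mul_sum]
    rw [Finset.sum_comm]
    exact Finset.sum_congr rfl fun i _ => Finset.sum_comm
  have hmain : (∑ r, (∑ i ∈ I, Phi p k r i) * (starRingEnd ℂ) (∑ j ∈ J, Phi p k r j))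
      = ∑ h ∈ Finset.Icc 1 (k-1),
          (1/(p:ℂ)) * (G h * ∑ i ∈ I, ∑ j ∈ J, (χk (i - j)) ^ (-(h:ℤ))) := by
    rw [hswap, Finset.sum_congr rfl (fun i hi => Finset.sum_congr rfl (hpair i hi))]
    rw [Finset.sum_congr rfl (fun i (hi : i ∈ I) => Finset.sum_comm), Finset.sum_comm]
    apply Finset.sum_congr rfl
    intro h _
    simp_rw [← Finset.mul_sum]
  have hhalf : (1/(p:ℝ)) * Real.sqrt p = (p:ℝ) ^ (-(1:ℝ)/2) := by
    rw [show (-(1:ℝ)/2) = -(1/2) by norm_num, Real.rpow_neg hp0.le, ← Real.sqrt_eq_rpow]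
    have hs : Real.sqrt p ≠ 0 := by positivity
    field_simp
    exact Real.sq_sqrt hp0.le
  calc ‖∑ r, (∑ i ∈ I, Phi p k r i)
        * (starRingEnd ℂ) (∑ j ∈ J, Phi p k r j)‖
      = ‖∑ h ∈ Finset.Icc 1 (k-1),
          (1/(p:ℂ)) * (G h * ∑ i ∈ I, ∑ j ∈ J, (χk (i - j)) ^ (-(h:ℤ)))‖ := by rw [hmain]
    _ ≤ ∑ h ∈ Finset.Icc 1 (k-1), ‖
          (1/(p:ℂ)) * (G h * ∑ i ∈ I, ∑ j ∈ J, (χk (i - j)) ^ (-(h:ℤ)))‖ :=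
        norm_sum_le _ _
    _ = ∑ h ∈ Finset.Icc 1 (k-1), (p:ℝ) ^ (-(1:ℝ)/2)
          * ‖∑ i ∈ I, ∑ j ∈ J, (χk (i - j)) ^ (-(h:ℤ))‖ := by
        apply Finset.sum_congr rfl
        intro h hh
        simp only [Finset.mem_Icc] at hh
        have hhk : h < k := by omega
        rw [norm_mul, norm_mul]
        rw [show ‖(1/(p:ℂ))‖ = 1/(p:ℝ) by
          rw [norm_div, norm_one, Complex.norm_natCast]]
        rw [hGdef]
        rw [abs_gauss hp hodd hg hχ hh.1 hhk]
        rw [← mul_assoc, hhalf]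
    _ = (p : ℝ) ^ (-(1 : ℝ) / 2) *
          ∑ h ∈ Finset.Icc 1 (k - 1),
            ‖∑ i ∈ I, ∑ j ∈ J, (χk (i - j)) ^ (-(h : ℤ))‖ :=
        (Finset.mul_sum _ _ _).symm
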